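/- arXiv:math/0110049 — 2 statements merged into one kernel-verified Lean document; each statement's English description precedes it below -/
import Mathlib

section
/- Let ξ be an integer with |ξ| ≥ 2 and let N be a positive integer with N⁶ < c·|ξ| for a sufficiently small absolute constant c. Then for any integer l with 0 < |l| ≤ C|ξ|³, the number of divisors n of l with |n - ξ| ≤ N is at most 3. -/
set_option maxHeartbeats 1000000

lemma key_dvd (A B C D : ℕ) :
    A * B * C * D ∣ Nat.lcm (Nat.lcm (Nat.lcm A B) C) D *
      (Nat.gcd A B * (Nat.gcd A C * Nat.gcd B C) *
        (Nat.gcd A D * (Nat.gcd B D * Nat.gcd C D))) := by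
  set L2 := Nat.lcm A B with hL2
  set L3 := Nat.lcm L2 C with hL3
  set L4 := Nat.lcm L3 D with hL4
  have hL2d : L2 ∣ A * B := Nat.lcm_dvd (dvd_mul_right A B) (dvd_mul_left B A)
  have hL3d : L3 ∣ A * B * C :=
    Nat.lcm_dvd (hL2d.trans (dvd_mul_right _ C)) (dvd_mul_left C (A * B))
  have h2 : Nat.gcd L2 C ∣ Nat.gcd A C * Nat.gcd B C := by
    have h : Nat.gcd L2 C ∣ Nat.gcd C (A * B) :=
      Nat.dvd_gcd (Nat.gcd_dvd_right _ _) ((Nat.gcd_dvd_left _ _).trans hL2d)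
    calc Nat.gcd L2 C ∣ Nat.gcd C A * Nat.gcd C B := h.trans (gcd_mul_dvd_mul_gcd C A B)
      _ = Nat.gcd A C * Nat.gcd B C := by rw [Nat.gcd_comm C A, Nat.gcd_comm C B]
  have h3 : Nat.gcd L3 D ∣ Nat.gcd A D * (Nat.gcd B D * Nat.gcd C D) := by
    have h : Nat.gcd L3 D ∣ Nat.gcd D (A * B * C) :=
      Nat.dvd_gcd (Nat.gcd_dvd_right _ _) ((Nat.gcd_dvd_left _ _).trans hL3d)
    have h' : Nat.gcd D (A * B * C) ∣ Nat.gcd D (A * B) * Nat.gcd D C :=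
      gcd_mul_dvd_mul_gcd D (A * B) C
    have h'' : Nat.gcd D (A * B) ∣ Nat.gcd D A * Nat.gcd D B := gcd_mul_dvd_mul_gcd D A B
    calc Nat.gcd L3 D ∣ Nat.gcd D (A * B) * Nat.gcd D C := h.trans h'
      _ ∣ (Nat.gcd D A * Nat.gcd D B) * Nat.gcd D C := mul_dvd_mul_right h'' _
      _ = Nat.gcd A D * (Nat.gcd B D * Nat.gcd C D) := by
          rw [Nat.gcd_comm D A, Nat.gcd_comm D B, Nat.gcd_comm D C]; ring
  have e : A * B * C * D = (Nat.gcd A B * L4) * (Nat.gcd L2 C * Nat.gcd L3 D) := by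
    calc A * B * C * D = (Nat.gcd A B * L2) * C * D := by rw [Nat.gcd_mul_lcm]
      _ = Nat.gcd A B * (L2 * C) * D := by ring
      _ = Nat.gcd A B * (Nat.gcd L2 C * L3) * D := by rw [Nat.gcd_mul_lcm]
      _ = Nat.gcd A B * Nat.gcd L2 C * (L3 * D) := by ring
      _ = Nat.gcd A B * Nat.gcd L2 C * (Nat.gcd L3 D * L4) := by rw [Nat.gcd_mul_lcm]
      _ = (Nat.gcd A B * L4) * (Nat.gcd L2 C * Nat.gcd L3 D) := by ring
  rw [e]
  calc (Nat.gcd A B * L4) * (Nat.gcd L2 C * Nat.gcd L3 D)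
      ∣ (Nat.gcd A B * L4) *
        ((Nat.gcd A C * Nat.gcd B C) * (Nat.gcd A D * (Nat.gcd B D * Nat.gcd C D))) :=
        mul_dvd_mul_left _ (mul_dvd_mul h2 h3)
    _ = L4 * (Nat.gcd A B * (Nat.gcd A C * Nat.gcd B C) *
        (Nat.gcd A D * (Nat.gcd B D * Nat.gcd C D))) := by ring

theorem few_divisors_near_xi :
    ∀ C : ℝ, 0 < C → ∃ c : ℝ, 0 < c ∧
      ∀ ξ N l : ℤ, 2 ≤ |ξ| → 0 < N → ((N : ℝ)) ^ 6 < c * |(ξ : ℝ)| →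
        l ≠ 0 → |(l : ℝ)| ≤ C * |(ξ : ℝ)| ^ 3 →
        ((Finset.Icc (ξ - N) (ξ + N)).filter (fun n : ℤ => n ∣ l)).card ≤ 3 := by
  intro C hC
  refine ⟨min (1/2) (1/(2048*C)), lt_min (by norm_num) (by positivity), ?_⟩
  intro ξ N l hξ hN hNc hl0 hlC
  by_contra hcard
  push_neg at hcard
  set s := (Finset.Icc (ξ - N) (ξ + N)).filter (fun n : ℤ => n ∣ l) with hs
  obtain ⟨t, hts, ht4⟩ := Finset.exists_subset_card_eq (show 4 ≤ s.card from hcard)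
  obtain ⟨w, hw⟩ := Finset.card_pos.mp (by rw [ht4]; norm_num : 0 < t.card)
  have h3c : (t.erase w).card = 3 := by rw [Finset.card_erase_of_mem hw, ht4]
  obtain ⟨x, y, z, hxy, hxz, hyz, he⟩ := Finset.card_eq_three.mp h3c
  have hx : x ∈ t.erase w := by rw [he]; simp
  have hy : y ∈ t.erase w := by rw [he]; simp
  have hz : z ∈ t.erase w := by rw [he]; simp
  have hwx : w ≠ x := fun h => (Finset.mem_erase.mp hx).1 h.symm
  have hwy : w ≠ y := fun h => (Finset.mem_erase.mp hy).1 h.symm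
  have hwz : w ≠ z := fun h => (Finset.mem_erase.mp hz).1 h.symm
  have hx' : x ∈ t := (Finset.mem_erase.mp hx).2
  have hy' : y ∈ t := (Finset.mem_erase.mp hy).2
  have hz' : z ∈ t := (Finset.mem_erase.mp hz).2
  have hmem : ∀ u ∈ t, (ξ - N ≤ u ∧ u ≤ ξ + N) ∧ u ∣ l := by
    intro u hu
    have h := hts hu
    rw [hs, Finset.mem_filter, Finset.mem_Icc] at h
    exact h
  -- real number setup
  set X : ℝ := |(ξ : ℝ)| with hXdef
  have hX : (2:ℝ) ≤ X := by
    have : ((2:ℤ):ℝ) ≤ ((|ξ|:ℤ):ℝ) := Int.cast_le.mpr hξ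
    simpa [hXdef] using this
  have hXpos : (0:ℝ) < X := by linarith
  have hn1 : (1:ℝ) ≤ (N:ℝ) := by exact_mod_cast hN
  have hn6 : (N:ℝ) ≤ (N:ℝ)^6 := le_self_pow₀ hn1 (by norm_num)
  have hcle : min (1/2) (1/(2048*C)) ≤ (1/2 : ℝ) := min_le_left _ _
  have hcle2 : min (1/2) (1/(2048*C)) ≤ (1/(2048*C) : ℝ) := min_le_right _ _
  have hNX : (N:ℝ) < X/2 := by
    have : (N:ℝ)^6 < (1/2) * X :=
      hNc.trans_le (mul_le_mul_of_nonneg_right hcle hXpos.le)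
    linarith
  -- lower bound on |u|
  have habs : ∀ u ∈ t, X/2 ≤ ((u.natAbs : ℝ)) := by
    intro u hu
    obtain ⟨⟨h1, h2⟩, _⟩ := hmem u hu
    have h1' : (ξ:ℝ) - N ≤ (u:ℝ) := by exact_mod_cast h1
    have h2' : (u:ℝ) ≤ (ξ:ℝ) + N := by exact_mod_cast h2
    have ht1 : |(ξ:ℝ)| - |(u:ℝ)| ≤ |(ξ:ℝ) - (u:ℝ)| := abs_sub_abs_le_abs_sub _ _
    have ht2 : |(ξ:ℝ) - (u:ℝ)| ≤ (N:ℝ) := abs_le.mpr ⟨by linarith, by linarith⟩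
    have ht3 : ((u.natAbs : ℝ)) = |(u:ℝ)| := by
      rw [Nat.cast_natAbs, Int.cast_abs]
    rw [ht3]
    have := hXdef
    linarith [ht1, ht2, hNX]
  -- gcd bounds
  have hgcd : ∀ u v : ℤ, u ∈ t → v ∈ t → u ≠ v →
      ((Nat.gcd u.natAbs v.natAbs : ℝ)) ≤ 2 * (N:ℝ) := by
    intro u v hu hv huv
    obtain ⟨⟨h1, h2⟩, _⟩ := hmem u hu
    obtain ⟨⟨h3, h4⟩, _⟩ := hmem v hv
    have hdvd : ((Int.gcd u v : ℤ)) ∣ u - v := dvd_sub (Int.gcd_dvd_left u v) (Int.gcd_dvd_right u v)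
    have hpos : (0:ℤ) < |u - v| := abs_pos.mpr (sub_ne_zero.mpr huv)
    have hle : ((Int.gcd u v : ℤ)) ≤ |u - v| :=
      Int.le_of_dvd hpos ((dvd_abs _ _).mpr hdvd)
    have hb : |u - v| ≤ 2 * N := abs_le.mpr ⟨by linarith, by linarith⟩
    have hz2 : ((Int.gcd u v : ℤ)) ≤ 2 * N := hle.trans hb
    have hrfl : Int.gcd u v = Nat.gcd u.natAbs v.natAbs := rfl
    rw [hrfl] at hz2
    exact_mod_cast hz2
  -- divisibility
  have hdiv : ∀ u ∈ t, u.natAbs ∣ l.natAbs := fun u hu =>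
    Int.natAbs_dvd_natAbs.mpr (hmem u hu).2
  set A := w.natAbs with hA
  set B := x.natAbs with hB
  set Cn := y.natAbs with hCn
  set Dn := z.natAbs with hDn
  have hL4 : Nat.lcm (Nat.lcm (Nat.lcm A B) Cn) Dn ∣ l.natAbs :=
    Nat.lcm_dvd (Nat.lcm_dvd (Nat.lcm_dvd (hdiv w hw) (hdiv x hx')) (hdiv y hy')) (hdiv z hz')
  set G : ℕ := Nat.gcd A B * (Nat.gcd A Cn * Nat.gcd B Cn) *
      (Nat.gcd A Dn * (Nat.gcd B Dn * Nat.gcd Cn Dn)) with hG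
  have hdvd2 : A * B * Cn * Dn ∣ l.natAbs * G :=
    (key_dvd A B Cn Dn).trans (mul_dvd_mul_right hL4 _)
  -- positivity of pieces
  have hApos : 0 < A := by
    have := habs w hw
    have : (0:ℝ) < (A:ℝ) := lt_of_lt_of_le (by linarith) this
    exact_mod_cast this
  have hBpos : 0 < B := by
    have := habs x hx'
    have : (0:ℝ) < (B:ℝ) := lt_of_lt_of_le (by linarith) this
    exact_mod_cast this
  have hCpos : 0 < Cn := by
    have := habs y hy'
    have : (0:ℝ) < (Cn:ℝ) := lt_of_lt_of_le (by linarith) this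
    exact_mod_cast this
  have hDpos : 0 < Dn := by
    have := habs z hz'
    have : (0:ℝ) < (Dn:ℝ) := lt_of_lt_of_le (by linarith) this
    exact_mod_cast this
  have hGpos : 0 < G := by
    rw [hG]
    have g1 := Nat.gcd_pos_of_pos_left B hApos
    have g2 := Nat.gcd_pos_of_pos_left Cn hApos
    have g3 := Nat.gcd_pos_of_pos_left Cn hBpos
    have g4 := Nat.gcd_pos_of_pos_left Dn hApos
    have g5 := Nat.gcd_pos_of_pos_left Dn hBpos
    have g6 := Nat.gcd_pos_of_pos_left Dn hCpos
    positivity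
  have hlpos : 0 < l.natAbs := Int.natAbs_pos.mpr hl0
  have hle1 : A * B * Cn * Dn ≤ l.natAbs * G :=
    Nat.le_of_dvd (by positivity) hdvd2
  -- cast to ℝ
  have hle2 : (A:ℝ) * B * Cn * Dn ≤ (l.natAbs : ℝ) *
      ((Nat.gcd A B : ℝ) * ((Nat.gcd A Cn : ℝ) * (Nat.gcd B Cn : ℝ)) *
        ((Nat.gcd A Dn : ℝ) * ((Nat.gcd B Dn : ℝ) * (Nat.gcd Cn Dn : ℝ)))) := by
    have := hle1
    rw [hG] at this
    exact_mod_cast this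
  have hlabs : ((l.natAbs : ℝ)) = |(l:ℝ)| := by
    rw [Nat.cast_natAbs, Int.cast_abs]
  rw [hlabs] at hle2
  -- gather real bounds
  have hAr := habs w hw
  have hBr := habs x hx'
  have hCr := habs y hy'
  have hDr := habs z hz'
  have g1 := hgcd w x hw hx' hwx
  have g2 := hgcd w y hw hy' hwy
  have g3 := hgcd x y hx' hy' hxy
  have g4 := hgcd w z hw hz' hwz
  have g5 := hgcd x z hx' hz' hxz
  have g6 := hgcd y z hy' hz' hyz
  have hX2 : (0:ℝ) < X/2 := by linarith
  have hAnn : (0:ℝ) ≤ (A:ℝ) := Nat.cast_nonneg _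
  have hBnn : (0:ℝ) ≤ (B:ℝ) := Nat.cast_nonneg _
  have hCnn : (0:ℝ) ≤ (Cn:ℝ) := Nat.cast_nonneg _
  have hDnn : (0:ℝ) ≤ (Dn:ℝ) := Nat.cast_nonneg _
  -- product lower bound
  have q1 : X/2 * (X/2) ≤ (A:ℝ) * B := mul_le_mul hAr hBr hX2.le hAnn
  have q2 : X/2 * (X/2) * (X/2) ≤ (A:ℝ) * B * Cn :=
    mul_le_mul q1 hCr hX2.le (by positivity)
  have q3 : X/2 * (X/2) * (X/2) * (X/2) ≤ (A:ℝ) * B * Cn * Dn :=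
    mul_le_mul q2 hDr hX2.le (by positivity)
  -- gcd product upper bound
  have n2 : (0:ℝ) ≤ 2 * (N:ℝ) := by linarith
  have gnn : ∀ a b : ℕ, (0:ℝ) ≤ ((Nat.gcd a b : ℝ)) := fun a b => Nat.cast_nonneg _
  have r1 : ((Nat.gcd A Cn : ℝ)) * (Nat.gcd B Cn : ℝ) ≤ (2*(N:ℝ)) * (2*N) :=
    mul_le_mul g2 g3 (gnn _ _) n2
  have r2 : ((Nat.gcd B Dn : ℝ)) * (Nat.gcd Cn Dn : ℝ) ≤ (2*(N:ℝ)) * (2*N) :=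
    mul_le_mul g5 g6 (gnn _ _) n2
  have r3 : ((Nat.gcd A Dn : ℝ)) * ((Nat.gcd B Dn : ℝ) * (Nat.gcd Cn Dn : ℝ)) ≤
      (2*(N:ℝ)) * ((2*N) * (2*N)) :=
    mul_le_mul g4 r2 (by positivity) n2
  have r4 : ((Nat.gcd A B : ℝ)) * ((Nat.gcd A Cn : ℝ) * (Nat.gcd B Cn : ℝ)) ≤
      (2*(N:ℝ)) * ((2*N) * (2*N)) :=
    mul_le_mul g1 r1 (by positivity) n2
  have r5 : ((Nat.gcd A B : ℝ)) * ((Nat.gcd A Cn : ℝ) * (Nat.gcd B Cn : ℝ)) *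
      ((Nat.gcd A Dn : ℝ) * ((Nat.gcd B Dn : ℝ) * (Nat.gcd Cn Dn : ℝ))) ≤
      ((2*(N:ℝ)) * ((2*N) * (2*N))) * ((2*(N:ℝ)) * ((2*N) * (2*N))) :=
    mul_le_mul r4 r3 (by positivity) (by positivity)
  -- combine
  have hlnn : (0:ℝ) ≤ |(l:ℝ)| := abs_nonneg _
  have s1 : |(l:ℝ)| * (((Nat.gcd A B : ℝ)) * ((Nat.gcd A Cn : ℝ) * (Nat.gcd B Cn : ℝ)) *
      ((Nat.gcd A Dn : ℝ) * ((Nat.gcd B Dn : ℝ) * (Nat.gcd Cn Dn : ℝ)))) ≤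
      (C * X^3) * (((2*(N:ℝ)) * ((2*N) * (2*N))) * ((2*(N:ℝ)) * ((2*N) * (2*N)))) :=
    mul_le_mul hlC r5 (by positivity) (by positivity)
  have s2 : (C * X^3) * (((2*(N:ℝ)) * ((2*N) * (2*N))) * ((2*(N:ℝ)) * ((2*N) * (2*N)))) =
      64 * C * X^3 * (N:ℝ)^6 := by ring
  have s3 : 64 * C * X^3 * (N:ℝ)^6 < 64 * C * X^3 * (min (1/2) (1/(2048*C)) * X) := by
    have hp : (0:ℝ) < 64 * C * X^3 := by positivity
    exact (mul_lt_mul_iff_right₀ hp).mpr hNc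
  have s4 : 64 * C * X^3 * (min (1/2) (1/(2048*C)) * X) ≤ (1/32) * X^4 := by
    have hc' : C * min (1/2) (1/(2048*C)) ≤ C * (1/(2048*C)) :=
      mul_le_mul_of_nonneg_left hcle2 hC.le
    have hc'' : C * (1/(2048*C)) = 1/2048 := by field_simp
    have hX4 : (0:ℝ) ≤ X^4 := by positivity
    have hkey := mul_le_mul_of_nonneg_right (hc'.trans_eq hc'') hX4
    calc 64 * C * X^3 * (min (1/2) (1/(2048*C)) * X)
        = 64 * (C * min (1/2) (1/(2048*C)) * X^4) := by ring
      _ ≤ 64 * ((1/2048) * X^4) := by linarith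
      _ = (1/32) * X^4 := by ring
  -- final contradiction
  have final : X/2 * (X/2) * (X/2) * (X/2) < (1/32) * X^4 := by
    calc X/2 * (X/2) * (X/2) * (X/2) ≤ (A:ℝ) * B * Cn * Dn := q3
      _ ≤ _ := hle2
      _ ≤ (C * X^3) * (((2*(N:ℝ)) * ((2*N) * (2*N))) * ((2*(N:ℝ)) * ((2*N) * (2*N)))) := s1
      _ = 64 * C * X^3 * (N:ℝ)^6 := s2
      _ < 64 * C * X^3 * (min (1/2) (1/(2048*C)) * X) := s3
      _ ≤ (1/32) * X^4 := s4
  rw [show X/2 * (X/2) * (X/2) * (X/2) = (1/16) * X^4 from by ring] at final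
  have hx4 : (0:ℝ) < X^4 := pow_pos hXpos 4
  linarith
end

section
/- If n₁, n₂, n₃, n₄ are pairwise distinct nonzero integers each dividing a nonzero integer l, then the product n₁·n₂·n₃·n₄ divides l · ∏_{1 ≤ i < j ≤ 4} gcd(nᵢ, nⱼ). -/
theorem nat_version (a b c d L : ℕ) (ha0 : a ≠ 0) (hb0 : b ≠ 0) (hc0 : c ≠ 0) (hd0 : d ≠ 0)
    (hL : L ≠ 0) (ha : a ∣ L) (hb : b ∣ L) (hc : c ∣ L) (hd : d ∣ L) :
    a * b * c * d ∣
      L * (Nat.gcd a b * Nat.gcd a c * Nat.gcd a d * Nat.gcd b c * Nat.gcd b d * Nat.gcd c d) := by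
  have gab : Nat.gcd a b ≠ 0 := Nat.gcd_ne_zero_left ha0
  have gac : Nat.gcd a c ≠ 0 := Nat.gcd_ne_zero_left ha0
  have gad : Nat.gcd a d ≠ 0 := Nat.gcd_ne_zero_left ha0
  have gbc : Nat.gcd b c ≠ 0 := Nat.gcd_ne_zero_left hb0
  have gbd : Nat.gcd b d ≠ 0 := Nat.gcd_ne_zero_left hb0
  have gcd' : Nat.gcd c d ≠ 0 := Nat.gcd_ne_zero_left hc0
  rw [← Nat.factorization_le_iff_dvd (by positivity) (by positivity), Finsupp.le_def]
  intro p
  have Ha := Finsupp.le_def.mp ((Nat.factorization_le_iff_dvd ha0 hL).mpr ha) p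
  have Hb := Finsupp.le_def.mp ((Nat.factorization_le_iff_dvd hb0 hL).mpr hb) p
  have Hc := Finsupp.le_def.mp ((Nat.factorization_le_iff_dvd hc0 hL).mpr hc) p
  have Hd := Finsupp.le_def.mp ((Nat.factorization_le_iff_dvd hd0 hL).mpr hd) p
  rw [Nat.factorization_mul (by positivity) hd0, Nat.factorization_mul (by positivity) hc0,
    Nat.factorization_mul ha0 hb0, Nat.factorization_mul hL (by positivity),
    Nat.factorization_mul (by positivity) gcd', Nat.factorization_mul (by positivity) gbd,
    Nat.factorization_mul (by positivity) gbc, Nat.factorization_mul (by positivity) gad,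
    Nat.factorization_mul gab gac, Nat.factorization_gcd ha0 hb0, Nat.factorization_gcd ha0 hc0,
    Nat.factorization_gcd ha0 hd0, Nat.factorization_gcd hb0 hc0, Nat.factorization_gcd hb0 hd0,
    Nat.factorization_gcd hc0 hd0]
  simp only [Finsupp.add_apply, Finsupp.inf_apply]
  omega

theorem product_of_divisors_divides (n₁ n₂ n₃ n₄ l : ℤ)
    (h1 : n₁ ≠ 0) (h2 : n₂ ≠ 0) (h3 : n₃ ≠ 0) (h4 : n₄ ≠ 0) (hl : l ≠ 0)
    (h12 : n₁ ≠ n₂) (h13 : n₁ ≠ n₃) (h14 : n₁ ≠ n₄)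
    (h23 : n₂ ≠ n₃) (h24 : n₂ ≠ n₄) (h34 : n₃ ≠ n₄)
    (d1 : n₁ ∣ l) (d2 : n₂ ∣ l) (d3 : n₃ ∣ l) (d4 : n₄ ∣ l) :
    n₁ * n₂ * n₃ * n₄ ∣
      l * (Int.gcd n₁ n₂ * Int.gcd n₁ n₃ * Int.gcd n₁ n₄ *
           Int.gcd n₂ n₃ * Int.gcd n₂ n₄ * Int.gcd n₃ n₄ : ℤ) := by
  rw [← Int.natAbs_dvd_natAbs]
  simp only [Int.natAbs_mul, Int.natAbs_natCast, Int.gcd]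
  exact nat_version _ _ _ _ _
    (Int.natAbs_ne_zero.mpr h1) (Int.natAbs_ne_zero.mpr h2) (Int.natAbs_ne_zero.mpr h3)
    (Int.natAbs_ne_zero.mpr h4) (Int.natAbs_ne_zero.mpr hl)
    (Int.natAbs_dvd_natAbs.mpr d1) (Int.natAbs_dvd_natAbs.mpr d2)
    (Int.natAbs_dvd_natAbs.mpr d3) (Int.natAbs_dvd_natAbs.mpr d4)
end
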